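/- Let X be a compact, Hausdorff, totally disconnected topological space. Then the map Φ_X : X → X_{Clopens(X)} sending x to the function (C : Clopens X) ↦ decide (x ∈ C) is well-defined (its values satisfy the homomorphism conditions defining the Stone space) and is a homeomorphism from X onto the Stone space of the Boolean algebra Clopens(X). -/

import Mathlib

/-- The defining conditions for a point of the Stone space of a Boolean algebra `B`. -/
def IsStonePoint {B : Type*} [BooleanAlgebra B] (f : B → Bool) : Prop :=
  f ⊥ = false ∧ f ⊤ = true ∧ (∀ a b : B, f (a ⊓ b) = (f a && f b)) ∧
    (∀ a b : B, f (a ⊔ b) = (f a || f b))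

/-- The Stone space of a Boolean algebra `B`, as a subspace of the product
`B → Bool` with `Bool` discrete. -/
def StoneSpace (B : Type*) [BooleanAlgebra B] : Type _ :=
  {f : B → Bool // IsStonePoint f}

instance (B : Type*) [BooleanAlgebra B] : TopologicalSpace (StoneSpace B) :=
  instTopologicalSpaceSubtype

open TopologicalSpace in
/-- A compact Hausdorff totally disconnected space `X` is canonically homeomorphic
to the Stone space of its Boolean algebra of clopen subsets, via
`x ↦ (C ↦ decide (x ∈ C))`; in particular this map is well defined (its values
satisfy the homomorphism conditions defining the Stone space). -/
theorem homeomorph_stoneSpace_clopens (X : Type*) [TopologicalSpace X]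
    [CompactSpace X] [T2Space X] [TotallyDisconnectedSpace X] :
    (∀ x : X, IsStonePoint fun C : Clopens X => (C : Set X).boolIndicator x) ∧
    ∃ Φ : X ≃ₜ StoneSpace (Clopens X),
      ∀ (x : X) (C : Clopens X), ((Φ x : StoneSpace (Clopens X)).1 C = true ↔ x ∈ C) := by
  classical
  have hmem : ∀ (s : Set X) (x : X), s.boolIndicator x = true ↔ x ∈ s := by
    intro s x
    exact (s.mem_iff_boolIndicator x).symm
  have hsp : ∀ x : X, IsStonePoint fun C : Clopens X => (C : Set X).boolIndicator x := by
    intro x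
    refine ⟨?_, ?_, ?_, ?_⟩
    · simp [Set.boolIndicator]
    · simp [Set.boolIndicator]
    · intro a b
      simp only [Set.boolIndicator, Clopens.coe_inf, Set.mem_inter_iff]
      by_cases ha : x ∈ (a : Set X) <;> by_cases hb : x ∈ (b : Set X) <;> simp [ha, hb]
    · intro a b
      simp only [Set.boolIndicator, Clopens.coe_sup, Set.mem_union]
      by_cases ha : x ∈ (a : Set X) <;> by_cases hb : x ∈ (b : Set X) <;> simp [ha, hb]
  refine ⟨hsp, ?_⟩
  set φ : X → StoneSpace (Clopens X) :=
    fun x => ⟨fun C : Clopens X => (C : Set X).boolIndicator x, hsp x⟩ with hφ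
  -- injective
  haveI : TotallySeparatedSpace X := by
    rw [← loc_compact_t2_tot_disc_iff_tot_sep]; infer_instance
  have hinj : Function.Injective φ := by
    intro x y hxy
    by_contra hne
    obtain ⟨U, hU, hxU, hyU⟩ := exists_isClopen_of_totally_separated hne
    have := congrArg (fun g : StoneSpace (Clopens X) => g.1 ⟨U, hU⟩) hxy
    simp only [hφ] at this
    have hx' : U.boolIndicator x = true := (hmem U x).mpr hxU
    have hy' : U.boolIndicator y = false := (U.notMem_iff_boolIndicator y).mp hyU
    rw [show ((⟨U, hU⟩ : Clopens X) : Set X) = U from rfl] at this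
    rw [hx', hy'] at this
    exact Bool.noConfusion this
  -- surjective
  have hsurj : Function.Surjective φ := by
    intro f
    obtain ⟨hbot, htop, hinf, hsup⟩ := f.2
    set S : Set (Clopens X) := {C | f.1 C = true} with hS
    haveI : Nonempty S := ⟨⟨⊤, htop⟩⟩
    have hne : ∀ C : S, ((C : Clopens X) : Set X).Nonempty := by
      rintro ⟨C, hC⟩
      rcases ((C : Set X)).eq_empty_or_nonempty with h | h
      · exfalso
        have hCbot : C = ⊥ := by ext1; simpa using h
        have hC' : f.1 C = true := hC
        rw [hCbot, hbot] at hC'; exact Bool.noConfusion hC'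
      · exact h
    have hdir : Directed (· ⊇ ·) (fun C : S => ((C : Clopens X) : Set X)) := by
      rintro ⟨C, hC⟩ ⟨D, hD⟩
      refine ⟨⟨C ⊓ D, ?_⟩, ?_, ?_⟩
      · show f.1 (C ⊓ D) = true
        rw [hinf, hC, hD]; rfl
      · exact Set.inter_subset_left
      · exact Set.inter_subset_right
    obtain ⟨x, hx⟩ := IsCompact.nonempty_iInter_of_directed_nonempty_isCompact_isClosed
      (fun C : S => ((C : Clopens X) : Set X)) hdir hne
      (fun C => (C : Clopens X).isClopen.isClosed.isCompact)
      (fun C => (C : Clopens X).isClopen.isClosed)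
    refine ⟨x, ?_⟩
    have key : ∀ C : Clopens X, f.1 C = true ↔ x ∈ (C : Set X) := by
      intro C
      constructor
      · intro hC
        exact Set.mem_iInter.mp hx ⟨C, hC⟩
      · intro hxC
        by_contra hC
        have hC' : f.1 C = false := by
          cases h : f.1 C
          · rfl
          · exact absurd h hC
        have hcompl : f.1 Cᶜ = true := by
          have := hsup C Cᶜ
          rw [sup_compl_eq_top, htop, hC'] at this
          simpa using this.symm
        have hxcompl : x ∈ ((Cᶜ : Clopens X) : Set X) := Set.mem_iInter.mp hx ⟨Cᶜ, hcompl⟩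
        rw [Clopens.coe_compl] at hxcompl
        exact hxcompl hxC
    apply Subtype.ext
    funext C
    simp only [hφ]
    by_cases h : x ∈ (C : Set X)
    · rw [((C : Set X).mem_iff_boolIndicator x).mp h, ((key C).mpr h).symm]
    · rw [((C : Set X).notMem_iff_boolIndicator x).mp h]
      cases hfc : f.1 C
      · rfl
      · exact absurd ((key C).mp hfc) h
  -- continuity
  have hcont : Continuous φ := by
    apply Continuous.subtype_mk
    apply continuous_pi
    intro C
    exact (continuous_boolIndicator_iff_isClopen (C : Set X)).mpr C.isClopen
  haveI : T2Space (StoneSpace (Clopens X)) :=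
    inferInstanceAs (T2Space {f : Clopens X → Bool // IsStonePoint f})
  refine ⟨Continuous.homeoOfEquivCompactToT2 (f := Equiv.ofBijective φ ⟨hinj, hsurj⟩) hcont, ?_⟩
  intro x C
  show (C : Set X).boolIndicator x = true ↔ x ∈ C
  exact hmem _ x
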